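/- In the ILT model, every automorphism f of G_t extends to an automorphism of G_{t+1} defined by mapping each node x of G_t to f(x) and each clone x' to (f(x))'; moreover the map f ↦ (this extension) is an injective group homomorphism, so Aut(G_0) embeds as a subgroup of Aut(G_t) for every t ≥ 0. -/

import Mathlib

open SimpleGraph Finset

universe u
variable {V : Type u}

/-- One step of the Iterated Local Transitivity model: every vertex `x` gets a
clone `Sum.inr x` joined to `x` and all of its neighbours; old vertices are `Sum.inl`. -/
def ILTstep (G : SimpleGraph V) : SimpleGraph (V ⊕ V) where
  Adj a b := match a, b with
    | Sum.inl x, Sum.inl y => G.Adj x y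
    | Sum.inl x, Sum.inr y => x = y ∨ G.Adj x y
    | Sum.inr x, Sum.inl y => x = y ∨ G.Adj x y
    | Sum.inr _, Sum.inr _ => False
  symm := by
    constructor
    rintro (x | x) (y | y) h
    · exact SimpleGraph.Adj.symm h
    · exact h.imp Eq.symm (fun hh => SimpleGraph.Adj.symm hh)
    · exact h.imp Eq.symm (fun hh => SimpleGraph.Adj.symm hh)
    · exact h.elim
  loopless := by
    constructor
    rintro (x | x) h
    · exact G.ne_of_adj h rfl
    · exact h

instance ILTstepDecAdj (G : SimpleGraph V) [DecidableEq V] [DecidableRel G.Adj] :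
    DecidableRel (ILTstep G).Adj := fun a b =>
  match a, b with
  | Sum.inl x, Sum.inl y => inferInstanceAs (Decidable (G.Adj x y))
  | Sum.inl x, Sum.inr y => inferInstanceAs (Decidable (x = y ∨ G.Adj x y))
  | Sum.inr x, Sum.inl y => inferInstanceAs (Decidable (x = y ∨ G.Adj x y))
  | Sum.inr _, Sum.inr _ => inferInstanceAs (Decidable False)

/-- The vertex set of the ILT model at time `t`. -/
def ILTV (V : Type u) : ℕ → Type u
  | 0 => V
  | t + 1 => ILTV V t ⊕ ILTV V t

/-- The graph of the ILT model at time `t`, starting from `G`. -/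
def ILTG (G : SimpleGraph V) : (t : ℕ) → SimpleGraph (ILTV V t)
  | 0 => G
  | t + 1 => ILTstep (ILTG G t)

instance ILTVFintype [Fintype V] : ∀ t, Fintype (ILTV V t)
  | 0 => inferInstanceAs (Fintype V)
  | t + 1 => letI := ILTVFintype t
             inferInstanceAs (Fintype (ILTV V t ⊕ ILTV V t))

instance ILTVDecEq [DecidableEq V] : ∀ t, DecidableEq (ILTV V t)
  | 0 => inferInstanceAs (DecidableEq V)
  | t + 1 => letI := ILTVDecEq t
             inferInstanceAs (DecidableEq (ILTV V t ⊕ ILTV V t))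

instance ILTGDecAdj (G : SimpleGraph V) [DecidableEq V] [DecidableRel G.Adj] :
    ∀ t, DecidableRel (ILTG G t).Adj
  | 0 => inferInstanceAs (DecidableRel G.Adj)
  | t + 1 => letI : DecidableEq (ILTV V t) := ILTVDecEq t
             letI : DecidableRel (ILTG G t).Adj := ILTGDecAdj G t
             ILTstepDecAdj (ILTG G t)

/-- The volume of a graph: the sum of the degrees of its vertices. -/
def graphVol [Fintype V] (G : SimpleGraph V) [DecidableRel G.Adj] : ℕ :=
  ∑ v, G.degree v

/-- The Wiener index: the sum of distances over unordered pairs of vertices. -/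
noncomputable def wienerIndex [Fintype V] (G : SimpleGraph V) : ℕ :=
  (∑ x : V, ∑ y : V, G.dist x y) / 2

def extIso (G : SimpleGraph V) (f : G ≃g G) : ILTstep G ≃g ILTstep G where
  toEquiv := Equiv.sumCongr f.toEquiv f.toEquiv
  map_rel_iff' := by
    rintro (x | x) (y | y)
    · exact f.map_rel_iff
    · exact or_congr (f.toEquiv.injective.eq_iff) f.map_rel_iff
    · exact or_congr (f.toEquiv.injective.eq_iff) f.map_rel_iff
    · exact Iff.rfl

lemma extIso_inl (G : SimpleGraph V) (f : G ≃g G) (x : V) :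
    extIso G f (Sum.inl x) = Sum.inl (f x) := rfl

lemma extIso_inr (G : SimpleGraph V) (f : G ≃g G) (x : V) :
    extIso G f (Sum.inr x) = Sum.inr (f x) := rfl

lemma extIso_injective (G : SimpleGraph V) : Function.Injective (extIso G) := by
  intro f g h
  ext x
  have := congrArg (fun F : ILTstep G ≃g ILTstep G => F (Sum.inl x)) h
  simpa [extIso_inl] using this

lemma extIso_trans (G : SimpleGraph V) (f g : G ≃g G) :
    extIso G (f.trans g) = (extIso G f).trans (extIso G g) := by
  ext x
  cases x <;> rfl

def ILTiso (G : SimpleGraph V) : ∀ t : ℕ, (G ≃g G) → ((ILTG G t) ≃g (ILTG G t))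
  | 0, f => f
  | t + 1, f => extIso (ILTG G t) (ILTiso G t f)

lemma ILTiso_injective (G : SimpleGraph V) : ∀ t, Function.Injective (ILTiso G t)
  | 0 => fun _ _ h => h
  | t + 1 => fun f g h =>
      ILTiso_injective G t (extIso_injective (ILTG G t) h)

lemma ILTiso_trans (G : SimpleGraph V) :
    ∀ t (f g : G ≃g G), ILTiso G t (f.trans g) = (ILTiso G t f).trans (ILTiso G t g)
  | 0, _, _ => rfl
  | t + 1, f, g => by
      show extIso (ILTG G t) (ILTiso G t (f.trans g)) = _
      rw [ILTiso_trans G t f g, extIso_trans]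
      rfl

theorem ILT_automorphism_embeds (G : SimpleGraph V) :
    (∀ f : G ≃g G, ∃ F : ILTstep G ≃g ILTstep G,
      (∀ x, F (Sum.inl x) = Sum.inl (f x)) ∧ (∀ x, F (Sum.inr x) = Sum.inr (f x))) ∧
    (∀ t : ℕ, ∃ Φ : (G ≃g G) → ((ILTG G t) ≃g (ILTG G t)),
      Function.Injective Φ ∧ ∀ f g : G ≃g G, Φ (f.trans g) = (Φ f).trans (Φ g)) := by
  constructor
  · intro f
    exact ⟨extIso G f, extIso_inl G f, extIso_inr G f⟩
  · intro t
    exact ⟨ILTiso G t, ILTiso_injective G t, ILTiso_trans G t⟩
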